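/- Let x = (x₁,x₂) and y = (y₁,y₂) be vectors in ℝ² with all entries strictly positive, and define g = √(x₁x₂/(3y₁y₂)) · [[2y₁/x₁, y₁/x₂],[y₂/x₁, 2y₂/x₂]]. Then g has determinant 1, all entries of g are strictly positive, and g x is a positive scalar multiple of y (so g maps the ray through x to the ray through y). -/

import Mathlib

theorem stmt12 (x₁ x₂ y₁ y₂ : ℝ) (hx₁ : 0 < x₁) (hx₂ : 0 < x₂)
    (hy₁ : 0 < y₁) (hy₂ : 0 < y₂) :
    (Real.sqrt (x₁ * x₂ / (3 * (y₁ * y₂))) •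
        !![2 * y₁ / x₁, y₁ / x₂; y₂ / x₁, 2 * y₂ / x₂]).det = 1 ∧
    (∀ i j, 0 < (Real.sqrt (x₁ * x₂ / (3 * (y₁ * y₂))) •
        !![2 * y₁ / x₁, y₁ / x₂; y₂ / x₁, 2 * y₂ / x₂]) i j) ∧
    (∃ c : ℝ, 0 < c ∧
      (Real.sqrt (x₁ * x₂ / (3 * (y₁ * y₂))) •
        !![2 * y₁ / x₁, y₁ / x₂; y₂ / x₁, 2 * y₂ / x₂]).mulVec ![x₁, x₂] = c • ![y₁, y₂]) := by
  set s := Real.sqrt (x₁ * x₂ / (3 * (y₁ * y₂))) with hs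
  have harg : 0 < x₁ * x₂ / (3 * (y₁ * y₂)) := by positivity
  have hspos : 0 < s := Real.sqrt_pos.mpr harg
  have hs2 : s ^ 2 = x₁ * x₂ / (3 * (y₁ * y₂)) := Real.sq_sqrt harg.le
  refine ⟨?_, ?_, ⟨3 * s, by positivity, ?_⟩⟩
  · rw [Matrix.det_fin_two]
    simp only [Matrix.smul_apply, Matrix.cons_val', Matrix.cons_val_zero, Matrix.cons_val_one,
      Matrix.head_cons, Matrix.head_fin_const, Matrix.empty_val', Matrix.cons_val_fin_one,
      smul_eq_mul, Matrix.of_apply]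
    have h : s ^ 2 * (3 * (y₁ * y₂)) = x₁ * x₂ := by
      rw [hs2]; field_simp
    field_simp
    linear_combination h
  · intro i j
    fin_cases i <;> fin_cases j <;>
      simp [Matrix.smul_apply] <;> positivity
  · funext i
    fin_cases i <;>
      simp [Matrix.mulVec, Matrix.vecHead, Matrix.vecTail, dotProduct] <;>
      field_simp <;> ring
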